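/- arXiv:2205.15283 — 4 statements merged into one kernel-verified Lean document; each statement's English description precedes it below -/
import Mathlib

section
/- For all integers m and n, 6m² + 5mn + 2n² ≠ 1 and 6m² + 5mn + 2n² ≠ -1. (This is the key Diophantine claim in the proof of Theorem 3 (thm:top / thm:doublecover): the intersection form of the double branched cover X₀ takes the value -2(6m² + 5mn + 2n²) on the class mA₀ + nB₀, and a homeomorphism to X₁ would force this to equal ±2, i.e. would force an integer solution of 6m² + 5mn + 2n² = ±1.) -/
/-- The key Diophantine claim in the proof of Theorem 3: for all integers `m` and `n`,
`6*m^2 + 5*m*n + 2*n^2` is neither `1` nor `-1`. -/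
theorem stmt_0 (m n : ℤ) :
    6 * m ^ 2 + 5 * m * n + 2 * n ^ 2 ≠ 1 ∧ 6 * m ^ 2 + 5 * m * n + 2 * n ^ 2 ≠ -1 := by
  constructor <;> intro h
  · have hm : m = 0 := by nlinarith [sq_nonneg (4*n + 5*m), sq_nonneg m]
    subst hm
    obtain ⟨k, hk⟩ : ∃ k, n ^ 2 = k := ⟨_, rfl⟩
    rw [hk] at h
    omega
  · nlinarith [sq_nonneg (12*m + 5*n), sq_nonneg n]
end

section
/- Let A be the integer matrix [[-12,-5],[-5,-4]] (a 2×2 symmetric matrix over ℤ). Then for every vector v ∈ ℤ², the value vᵀ A v is neither -2 nor 2. In other words, the integral lattice with Gram matrix A contains no class of square ±2. -/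
open Matrix

/-- The Gram matrix of the intersection form on `H₂` of the double branched cover `X₀`. -/
def A : Matrix (Fin 2) (Fin 2) ℤ := !![-12, -5; -5, -4]

/-- The integral lattice with Gram matrix `A = [[-12,-5],[-5,-4]]` contains no class of
square `±2`: for every `v ∈ ℤ²`, `vᵀ A v` is neither `-2` nor `2`. -/
theorem stmt_1 (v : Fin 2 → ℤ) :
    v ⬝ᵥ A.mulVec v ≠ -2 ∧ v ⬝ᵥ A.mulVec v ≠ 2 := by
  set m := v 0 with hm
  set n := v 1 with hn
  have h : v ⬝ᵥ A.mulVec v = -12*m^2 - 10*m*n - 4*n^2 := by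
    simp [A, Matrix.mulVec, dotProduct, Fin.sum_univ_two, ← hm, ← hn]
    ring
  rw [h]
  constructor
  · intro he
    have key : (12*m+5*n)^2 + 23*n^2 = 24 := by nlinarith
    have hn1 : -1 ≤ n := by nlinarith [sq_nonneg (n+1), sq_nonneg (12*m+5*n)]
    have hn2 : n ≤ 1 := by nlinarith [sq_nonneg (n-1), sq_nonneg (12*m+5*n)]
    interval_cases n
    · have k1 : (12*m-5)^2 = 1 := by nlinarith
      have b1 : 12*m-5 ≤ 1 := by nlinarith [sq_nonneg (12*m-5-1)]
      have b2 : -1 ≤ 12*m-5 := by nlinarith [sq_nonneg (12*m-5+1)]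
      omega
    · have k1 : (12*m)^2 = 24 := by nlinarith
      have b1 : 12*m ≤ 4 := by nlinarith [sq_nonneg (12*m-5)]
      have b2 : -4 ≤ 12*m := by nlinarith [sq_nonneg (12*m+5)]
      omega
    · have k1 : (12*m+5)^2 = 1 := by nlinarith
      have b1 : 12*m+5 ≤ 1 := by nlinarith [sq_nonneg (12*m+5-1)]
      have b2 : -1 ≤ 12*m+5 := by nlinarith [sq_nonneg (12*m+5+1)]
      omega
  · intro he
    nlinarith [sq_nonneg (12*m+5*n), sq_nonneg n]
end

section
/- Let A = [[-12,-5],[-5,-4]] and B = [[-12,1],[1,-2]] be 2×2 symmetric matrices over ℤ. Then A and B are not integrally congruent, and A and -B are not integrally congruent: there is no 2×2 integer matrix U with det U = ±1 such that Uᵀ A U = B or Uᵀ A U = -B. (This is the algebraic core of Theorem 3: the intersection forms of the double branched covers X₀ and X₁ are not isomorphic as unimodular integral lattices, for either choice of orientation, so X₀ and X₁ are not homeomorphic and hence the Seifert surfaces Σ₀ and Σ₁ are not topologically isotopic in B⁴.) -/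
open Matrix

/-- Gram matrix of the intersection form of the double branched cover `X₁`. -/
def B : Matrix (Fin 2) (Fin 2) ℤ := !![-12, 1; 1, -2]

/-- `A` and `B` are not integrally congruent, and `A` and `-B` are not integrally
congruent: there is no `U ∈ GL₂(ℤ)` (i.e. integer matrix with determinant `±1`)
with `Uᵀ * A * U = B` or `Uᵀ * A * U = -B`. -/
theorem stmt_3 :
    ¬ ∃ U : Matrix (Fin 2) (Fin 2) ℤ,
      (U.det = 1 ∨ U.det = -1) ∧ (Uᵀ * A * U = B ∨ Uᵀ * A * U = -B) := by
  rintro ⟨U, -, h | h⟩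
  · -- compare (1,1) entries: A would have to represent -2, but it does not
    have h11 := congrFun (congrFun h 1) 1
    simp [A, B, Matrix.mul_apply, Fin.sum_univ_two] at h11
    obtain ⟨a, b, eq⟩ : ∃ a b : ℤ, 12*a*a + 10*a*b + 4*b*b = 2 :=
      ⟨U 0 1, U 1 1, by linarith⟩
    -- (12a+5b)^2 + 23 b^2 = 24, so b ∈ {-1,0,1}
    have hb1 : -1 ≤ b := by nlinarith [sq_nonneg (12*a + 5*b), sq_nonneg (b+1)]
    have hb2 : b ≤ 1 := by nlinarith [sq_nonneg (12*a + 5*b), sq_nonneg (b-1)]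
    interval_cases b <;>
      rcases lt_trichotomy a 0 with ha | rfl | ha <;>
      first
      | nlinarith [sq_nonneg (a+1), sq_nonneg (a-1)]
      | omega
  · -- compare (0,0) entries: A is negative definite, but (-B)₀₀ = 12 > 0
    have h00 := congrFun (congrFun h 0) 0
    simp [A, B, Matrix.mul_apply, Fin.sum_univ_two] at h00
    nlinarith [sq_nonneg (12 * U 0 0 + 5 * U 1 0), sq_nonneg (U 1 0)]
end

section
/- Let A' = [[-12,-5],[-5,-3]] and B' = [[-12,1],[1,-1]] be 2×2 symmetric matrices over ℤ. Then there is no 2×2 integer matrix U with det U = ±1 such that Uᵀ A' U = B' or Uᵀ A' U = -B'. (This is the algebraic core of the non-orientable counterexample: the intersection forms of the double covers of B⁴ branched along the non-orientable surfaces Σ₀' and Σ₁' are not isomorphic as unimodular integral lattices — B' represents -1, via the vector (0,1), while A' never takes the values ±1 — hence Σ₀' and Σ₁' are not topologically isotopic in B⁴.) -/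
open Matrix

/-- Gram matrix of the intersection form of the double cover of `B⁴` branched along the
non-orientable surface `Σ₀'`. -/
def A' : Matrix (Fin 2) (Fin 2) ℤ := !![-12, -5; -5, -3]

/-- Gram matrix of the intersection form of the double cover of `B⁴` branched along the
non-orientable surface `Σ₁'`. -/
def B' : Matrix (Fin 2) (Fin 2) ℤ := !![-12, 1; 1, -1]

lemma aux_sq {a : ℤ} (ha : a ≠ 0) : 1 ≤ a ^ 2 := by
  have h1 := Int.one_le_abs (by simpa using ha)
  nlinarith [sq_abs a, abs_nonneg a]

lemma key (a b : ℤ) (c : ℤ) (hc : c = 1 ∨ c = -1) :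
    12 * a ^ 2 + 10 * a * b + 3 * b ^ 2 ≠ c := by
  intro h
  rcases eq_or_ne a 0 with rfl | ha
  · rcases eq_or_ne b 0 with rfl | hb
    · rcases hc with rfl | rfl <;> simp at h
    · have := aux_sq hb
      rcases hc with rfl | rfl <;> nlinarith
  · have := aux_sq ha
    rcases hc with rfl | rfl <;> nlinarith [sq_nonneg (5 * a + 3 * b)]

/-- There is no `U ∈ GL₂(ℤ)` (integer matrix with determinant `±1`) such that
`Uᵀ A' U = B'` or `Uᵀ A' U = -B'`. -/
theorem stmt_6 :
    ¬ ∃ U : Matrix (Fin 2) (Fin 2) ℤ,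
      (U.det = 1 ∨ U.det = -1) ∧ (Uᵀ * A' * U = B' ∨ Uᵀ * A' * U = -B') := by
  rintro ⟨U, -, h | h⟩ <;>
  · have h11 := congrArg (fun M => M 1 1) h
    simp [Matrix.mul_apply, Fin.sum_univ_two, A', B'] at h11
    ring_nf at h11
    first
    | exact key (U 0 1) (U 1 1) 1 (Or.inl rfl) (by linarith)
    | exact key (U 0 1) (U 1 1) (-1) (Or.inr rfl) (by linarith)
end
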